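/- Let Δ̃ and Δ̃* be complex Hilbert spaces, and set H10 = ℓ²(ℕ, Δ̃) ⊕ ℓ²(ℕ, Δ̃*). Let S denote the unilateral forward shift ((Sx)(0) = 0, (Sx)(n+1) = x(n)) and S* the backward shift ((S*x)(n) = x(n+1)) on the corresponding ℓ² space. Define the colligation U10 = [[A10,B10],[C10,D10]] : H10 ⊕ Δ̃ → H10 ⊕ Δ̃* by A10(x,y) = (Sx, S*y), B10 δ = (the sequence δ·e0 supported at index 0, 0), C10(x,y) = y(0), D10 = 0. Then U10 is a unitary operator, U10 is a simple colligation (the smallest closed subspace of H10 containing range B10 and range C10* and invariant for both A10 and A10* is all of H10), and its characteristic function vanishes identically: D10 = 0 and C10 ∘ A10ⁿ ∘ B10 = 0 for every n ≥ 0. -/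

import Mathlib

open ContinuousLinearMap

/-- The state space `H10 = ℓ²(ℕ, Δ̃) ⊕₂ ℓ²(ℕ, Δ̃*)` of the simple unitary colligation with
zero characteristic function. -/
noncomputable abbrev H10 (Δ Δs : Type*) [NormedAddCommGroup Δ] [NormedAddCommGroup Δs] :
    Type _ :=
  WithLp 2 ((lp (fun _ : ℕ => Δ) 2) × (lp (fun _ : ℕ => Δs) 2))

section Aux

variable {E : Type*} [NormedAddCommGroup E] [InnerProductSpace ℂ E]

omit [InnerProductSpace ℂ E] in
lemma aux_summable_sq (f : lp (fun _ : ℕ => E) 2) : Summable fun n => ‖f n‖ ^ 2 := by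
  have := (lp.memℓp f).summable (p := 2) (by norm_num)
  simpa [Real.rpow_natCast] using this

omit [InnerProductSpace ℂ E] in
lemma aux_memℓp_of_sq {f : ℕ → E} (h : Summable fun n => ‖f n‖ ^ 2) :
    Memℓp f 2 := by
  apply memℓp_gen
  simpa [Real.rpow_natCast] using h

omit [InnerProductSpace ℂ E] in
lemma aux_norm_sq_tsum (f : lp (fun _ : ℕ => E) 2) : ‖f‖ ^ 2 = ∑' n, ‖f n‖ ^ 2 := by
  have := lp.norm_rpow_eq_tsum (p := 2) (by norm_num) f
  simpa [Real.rpow_natCast] using this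

omit [InnerProductSpace ℂ E] in
lemma aux_norm_sq_split (f : lp (fun _ : ℕ => E) 2) :
    ‖f‖ ^ 2 = ‖f 0‖ ^ 2 + ∑' n, ‖f (n + 1)‖ ^ 2 := by
  rw [aux_norm_sq_tsum, Summable.tsum_eq_zero_add (aux_summable_sq f)]

/-- Backward shift of an `ℓ²` sequence. -/
noncomputable def auxShiftL [CompleteSpace E] (u : lp (fun _ : ℕ => E) 2) :
    lp (fun _ : ℕ => E) 2 :=
  ⟨fun n => u (n + 1),
    aux_memℓp_of_sq ((summable_nat_add_iff 1).2 (aux_summable_sq u))⟩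

omit [InnerProductSpace ℂ E] in
lemma auxShiftL_apply [CompleteSpace E] (u : lp (fun _ : ℕ => E) 2) (n : ℕ) :
    auxShiftL u n = u (n + 1) := rfl

/-- Forward shift of an `ℓ²` sequence. -/
noncomputable def auxShiftR [CompleteSpace E] (v : lp (fun _ : ℕ => E) 2) :
    lp (fun _ : ℕ => E) 2 :=
  ⟨fun n => Nat.casesOn n 0 fun m => v m,
    aux_memℓp_of_sq ((summable_nat_add_iff 1).1 (by simpa using aux_summable_sq v))⟩

omit [InnerProductSpace ℂ E] in
lemma auxShiftR_apply_zero [CompleteSpace E] (v : lp (fun _ : ℕ => E) 2) :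
    auxShiftR v 0 = 0 := rfl

omit [InnerProductSpace ℂ E] in
lemma auxShiftR_apply_succ [CompleteSpace E] (v : lp (fun _ : ℕ => E) 2) (n : ℕ) :
    auxShiftR v (n + 1) = v n := rfl

end Aux

/-- **The simple unitary colligation with zero characteristic function.**
The colligation `U10 = [[A10,B10],[C10,0]] : H10 ⊕ Δ̃ → H10 ⊕ Δ̃*` with
`A10(x,y) = (Sx, S*y)`, `B10 δ = (δ·e₀, 0)`, `C10(x,y) = y(0)` is unitary, simple, and
its characteristic function vanishes identically. -/
theorem stmt_13 {Δ Δs : Type*}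
    [NormedAddCommGroup Δ] [InnerProductSpace ℂ Δ] [CompleteSpace Δ]
    [NormedAddCommGroup Δs] [InnerProductSpace ℂ Δs] [CompleteSpace Δs]
    (A10 : H10 Δ Δs →L[ℂ] H10 Δ Δs)
    (hA10 : ∀ p : H10 Δ Δs,
      ((WithLp.equiv 2 _ (A10 p)).1) 0 = 0 ∧
      (∀ n : ℕ, ((WithLp.equiv 2 _ (A10 p)).1) (n + 1) = ((WithLp.equiv 2 _ p).1) n) ∧
      (∀ n : ℕ, ((WithLp.equiv 2 _ (A10 p)).2) n = ((WithLp.equiv 2 _ p).2) (n + 1)))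
    (B10 : Δ →L[ℂ] H10 Δ Δs)
    (hB10 : ∀ δ : Δ, WithLp.equiv 2 _ (B10 δ) = (lp.single 2 0 δ, 0))
    (C10 : H10 Δ Δs →L[ℂ] Δs)
    (hC10 : ∀ p : H10 Δ Δs, C10 p = ((WithLp.equiv 2 _ p).2) 0) :
    -- `U10` is a unitary operator `H10 ⊕ Δ̃ → H10 ⊕ Δ̃*` (with `D10 = 0`)
    (∀ (p : H10 Δ Δs) (δ : Δ),
        ‖A10 p + B10 δ‖ ^ 2 + ‖C10 p‖ ^ 2 = ‖p‖ ^ 2 + ‖δ‖ ^ 2) ∧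
    (∀ (q : H10 Δ Δs) (ε : Δs), ∃ (p : H10 Δ Δs) (δ : Δ),
        A10 p + B10 δ = q ∧ C10 p = ε) ∧
    -- `U10` is a simple colligation
    (∀ T : Submodule ℂ (H10 Δ Δs), IsClosed (T : Set (H10 Δ Δs)) →
        (∀ δ : Δ, B10 δ ∈ T) →
        (∀ ε : Δs, adjoint C10 ε ∈ T) →
        (∀ x ∈ T, A10 x ∈ T) →
        (∀ x ∈ T, adjoint A10 x ∈ T) →
        T = ⊤) ∧
    -- the characteristic function of `U10` vanishes identically
    (∀ n : ℕ, C10.comp ((A10 ^ n).comp B10) = 0) := by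
  -- restate hypotheses without `WithLp.equiv`
  have hA0 : ∀ p : H10 Δ Δs, ((A10 p).fst) 0 = 0 := fun p => (hA10 p).1
  have hAS : ∀ (p : H10 Δ Δs) (n : ℕ), ((A10 p).fst) (n + 1) = (p.fst) n := fun p => (hA10 p).2.1
  have hAB : ∀ (p : H10 Δ Δs) (n : ℕ), ((A10 p).snd) n = (p.snd) (n + 1) := fun p => (hA10 p).2.2
  have hB1 : ∀ δ : Δ, (B10 δ).fst = lp.single 2 0 δ := fun δ => congrArg Prod.fst (hB10 δ)
  have hB2 : ∀ δ : Δ, (B10 δ).snd = 0 := fun δ => congrArg Prod.snd (hB10 δ)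
  have hC : ∀ p : H10 Δ Δs, C10 p = (p.snd) 0 := hC10
  -- extensionality for H10
  have hext : ∀ z w : H10 Δ Δs, z.fst = w.fst → z.snd = w.snd → z = w := by
    intro z w h1 h2
    exact WithLp.ofLp_injective 2 (Prod.ext h1 h2)
  refine ⟨?_, ?_, ?_, ?_⟩
  · -- isometry
    intro p δ
    set q := A10 p + B10 δ with hq
    have hq1 : q.fst = (A10 p).fst + lp.single 2 0 δ := by
      rw [hq, WithLp.add_fst, hB1]
    have hq2 : q.snd = (A10 p).snd := by
      rw [hq, WithLp.add_snd, hB2, add_zero]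
    have hn : ‖q‖ ^ 2 = ‖q.fst‖ ^ 2 + ‖q.snd‖ ^ 2 := WithLp.prod_norm_sq_eq_of_L2 q
    have hp : ‖p‖ ^ 2 = ‖p.fst‖ ^ 2 + ‖p.snd‖ ^ 2 := WithLp.prod_norm_sq_eq_of_L2 p
    have h1 : ‖q.fst‖ ^ 2 = ‖δ‖ ^ 2 + ‖p.fst‖ ^ 2 := by
      rw [aux_norm_sq_split]
      have e0 : q.fst 0 = δ := by
        rw [hq1, lp.coeFn_add, Pi.add_apply, hA0, lp.single_apply_self, zero_add]
      have es : ∀ n : ℕ, q.fst (n + 1) = p.fst n := by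
        intro n
        rw [hq1, lp.coeFn_add, Pi.add_apply, hAS,
          lp.single_apply_ne (E := fun _ : ℕ => Δ) 2 0 δ (show n + 1 ≠ 0 by omega), add_zero]
      rw [e0]
      congr 1
      rw [aux_norm_sq_tsum]
      exact tsum_congr fun n => by rw [es n]
    have h2 : ‖q.snd‖ ^ 2 = ∑' n, ‖p.snd (n + 1)‖ ^ 2 := by
      rw [aux_norm_sq_tsum]
      exact tsum_congr fun n => by rw [hq2, hAB]
    have h3 : ‖p.snd‖ ^ 2 = ‖p.snd 0‖ ^ 2 + ∑' n, ‖p.snd (n + 1)‖ ^ 2 := aux_norm_sq_split p.snd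
    have h4 : ‖C10 p‖ ^ 2 = ‖p.snd 0‖ ^ 2 := by rw [hC]
    rw [hn, h1, h2, h4, hp, h3]; ring
  · -- surjectivity
    intro q ε
    refine ⟨(WithLp.equiv 2 _).symm (auxShiftL q.fst, lp.single 2 0 ε + auxShiftR q.snd), q.fst 0,
      ?_, ?_⟩
    · set p : H10 Δ Δs :=
        (WithLp.equiv 2 _).symm (auxShiftL q.fst, lp.single 2 0 ε + auxShiftR q.snd) with hp
      have hp1 : p.fst = auxShiftL q.fst := rfl
      have hp2 : p.snd = lp.single 2 0 ε + auxShiftR q.snd := rfl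
      apply hext
      · rw [WithLp.add_fst, hB1]
        apply lp.ext
        funext n
        rw [lp.coeFn_add, Pi.add_apply]
        cases n with
        | zero => rw [hA0, lp.single_apply_self, zero_add]
        | succ m =>
          rw [hAS, lp.single_apply_ne (E := fun _ : ℕ => Δ) 2 0 _ (show m + 1 ≠ 0 by omega),
            add_zero, hp1, auxShiftL_apply]
      · rw [WithLp.add_snd, hB2, add_zero]
        apply lp.ext
        funext n
        rw [hAB, hp2, lp.coeFn_add, Pi.add_apply,
          lp.single_apply_ne (E := fun _ : ℕ => Δs) 2 0 _ (show n + 1 ≠ 0 by omega),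
          auxShiftR_apply_succ, zero_add]
    · rw [hC]
      show ((lp.single 2 0 ε + auxShiftR q.snd : lp (fun _ : ℕ => Δs) 2) : ∀ _ : ℕ, Δs) 0 = ε
      rw [lp.coeFn_add, Pi.add_apply, lp.single_apply_self, auxShiftR_apply_zero, add_zero]
  · -- simplicity
    intro T hT hBmem hCmem hAmem hAamem
    -- the elementary vectors
    set e1 : ℕ → Δ → H10 Δ Δs := fun n δ => (WithLp.equiv 2 _).symm (lp.single 2 n δ, 0)
      with he1
    set e2 : ℕ → Δs → H10 Δ Δs := fun n ε => (WithLp.equiv 2 _).symm (0, lp.single 2 n ε)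
      with he2
    have he1mem : ∀ (n : ℕ) (δ : Δ), e1 n δ ∈ T := by
      intro n
      induction n with
      | zero =>
        intro δ
        have : e1 0 δ = B10 δ := by
          apply hext
          · rw [hB1]; rfl
          · rw [hB2]; rfl
        rw [this]; exact hBmem δ
      | succ n ih =>
        intro δ
        have : e1 (n + 1) δ = A10 (e1 n δ) := by
          apply hext
          · apply lp.ext
            funext m
            cases m with
            | zero =>
              rw [hA0]
              exact lp.single_apply_ne (E := fun _ : ℕ => Δ) 2 (n+1) δ
                (show 0 ≠ n + 1 by omega)
            | succ k =>
              rw [hAS]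
              show ((lp.single 2 (n+1) δ : lp (fun _ : ℕ => Δ) 2) : ∀ _ : ℕ, Δ) (k+1)
                = ((lp.single 2 n δ : lp (fun _ : ℕ => Δ) 2) : ∀ _ : ℕ, Δ) k
              rw [lp.single_apply, lp.single_apply]
              by_cases h : k = n
              · subst h; simp
              · rw [Pi.single_apply, Pi.single_apply, if_neg h, if_neg (fun hc => h (Nat.succ_injective hc))]
          · apply lp.ext
            funext m
            rw [hAB]
            rfl
        rw [this]; exact hAmem _ (ih δ)
    have hCadj : ∀ ε : Δs, adjoint C10 ε = e2 0 ε := by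
      intro ε
      apply ext_inner_right ℂ
      intro v
      rw [adjoint_inner_left, hC]
      show (inner ℂ ε (v.snd 0) : ℂ) = inner ℂ (e2 0 ε) v
      rw [WithLp.prod_inner_apply]
      show (inner ℂ ε (v.snd 0) : ℂ) =
        inner ℂ (0 : lp (fun _ : ℕ => Δ) 2) v.fst + inner ℂ (lp.single 2 0 ε) v.snd
      rw [inner_zero_left, lp.inner_single_left, zero_add]
    have hAadj : ∀ (n : ℕ) (ε : Δs), adjoint A10 (e2 n ε) = e2 (n + 1) ε := by
      intro n ε
      apply ext_inner_right ℂ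
      intro v
      rw [adjoint_inner_left]
      have lhs : (inner ℂ (e2 n ε) (A10 v) : ℂ) = inner ℂ ε ((A10 v).snd n) := by
        rw [WithLp.prod_inner_apply]
        show (inner ℂ (0 : lp (fun _ : ℕ => Δ) 2) (A10 v).fst : ℂ)
          + inner ℂ (lp.single 2 n ε) (A10 v).snd = inner ℂ ε ((A10 v).snd n)
        rw [inner_zero_left, lp.inner_single_left, zero_add]
      have rhs : (inner ℂ (e2 (n+1) ε) v : ℂ) = inner ℂ ε (v.snd (n+1)) := by
        rw [WithLp.prod_inner_apply]
        show (inner ℂ (0 : lp (fun _ : ℕ => Δ) 2) v.fst : ℂ)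
          + inner ℂ (lp.single 2 (n+1) ε) v.snd = inner ℂ ε (v.snd (n+1))
        rw [inner_zero_left, lp.inner_single_left, zero_add]
      rw [lhs, rhs, hAB]
    have he2mem : ∀ (n : ℕ) (ε : Δs), e2 n ε ∈ T := by
      intro n
      induction n with
      | zero => intro ε; rw [← hCadj]; exact hCmem ε
      | succ n ih => intro ε; rw [← hAadj]; exact hAamem _ (ih ε)
    -- orthogonal complement is trivial
    have horth : Tᗮ = ⊥ := by
      rw [Submodule.eq_bot_iff]
      intro v hv
      have h1 : v.fst = 0 := by
        apply lp.ext
        funext n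
        have h := (Submodule.mem_orthogonal T v).1 hv (e1 n (v.fst n)) (he1mem n _)
        have : (inner ℂ (e1 n (v.fst n)) v : ℂ) = inner ℂ (v.fst n) (v.fst n) := by
          rw [WithLp.prod_inner_apply]
          show (inner ℂ (lp.single 2 n (v.fst n)) v.fst : ℂ)
            + inner ℂ (0 : lp (fun _ : ℕ => Δs) 2) v.snd = inner ℂ (v.fst n) (v.fst n)
          rw [inner_zero_left, lp.inner_single_left, add_zero]
        rw [this] at h
        exact inner_self_eq_zero.1 h
      have h2 : v.snd = 0 := by
        apply lp.ext
        funext n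
        have h := (Submodule.mem_orthogonal T v).1 hv (e2 n (v.snd n)) (he2mem n _)
        have : (inner ℂ (e2 n (v.snd n)) v : ℂ) = inner ℂ (v.snd n) (v.snd n) := by
          rw [WithLp.prod_inner_apply]
          show (inner ℂ (0 : lp (fun _ : ℕ => Δ) 2) v.fst : ℂ)
            + inner ℂ (lp.single 2 n (v.snd n)) v.snd = inner ℂ (v.snd n) (v.snd n)
          rw [inner_zero_left, lp.inner_single_left, zero_add]
        rw [this] at h
        exact inner_self_eq_zero.1 h
      exact hext v 0 h1 h2
    haveI : CompleteSpace T := hT.completeSpace_coe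
    exact Submodule.orthogonal_eq_bot_iff.1 horth
  · -- zero characteristic function
    have hz : ∀ (n : ℕ) (δ : Δ), ((A10 ^ n) (B10 δ)).snd = 0 := by
      intro n δ
      induction n with
      | zero => rw [pow_zero, ContinuousLinearMap.one_def, ContinuousLinearMap.id_apply, hB2]
      | succ n ih =>
        rw [pow_succ']
        apply lp.ext
        funext m
        show ((A10 ((A10 ^ n) (B10 δ))).snd) m = (0 : lp (fun _ : ℕ => Δs) 2) m
        rw [hAB, ih]
        rfl
    intro n
    ext δ
    show C10 ((A10 ^ n) (B10 δ)) = 0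
    rw [hC, hz]
    rfl
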